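/- Let (X_{ij}) be an n×n array of i.i.d. real random variables with E|X| < ∞, quantile function g(p) = inf{r : P(X ≥ r) ≤ p} tending to ∞ and slowly varying at 0, and 𝓜_n = max_{π ∈ S_n} Σ_{i=1}^n X_{iπ(i)}. Then limsup_{n→∞} E[𝓜_n]/(n·g(1/n)) ≤ 1. -/

import Mathlib

open MeasureTheory ProbabilityTheory Filter Topology

open scoped ENNReal NNReal

namespace RAP

variable {P : Measure ℝ} [IsProbabilityMeasure P]

/-- tail expectation function -/
noncomputable def T (P : Measure ℝ) (r : ℝ) : ℝ := ∫ x, max (x - r) 0 ∂P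

lemma Sne (hp : 0 < (p:ℝ)) : {r : ℝ | (P (Set.Ici r)).toReal ≤ p}.Nonempty := by
  have h0 : Tendsto (fun n : ℕ => P (Set.Ici (n : ℝ))) atTop (𝓝 (P (⋂ n : ℕ, Set.Ici (n:ℝ)))) := by
    apply tendsto_measure_iInter_atTop
    · exact fun n => (measurableSet_Ici).nullMeasurableSet
    · exact fun a b hab => Set.Ici_subset_Ici.2 (by exact_mod_cast hab)
    · exact ⟨0, measure_ne_top _ _⟩
  have hI : (⋂ n : ℕ, Set.Ici (n:ℝ)) = ∅ := by
    ext x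
    simp only [Set.mem_iInter, Set.mem_Ici, Set.mem_empty_iff_false, iff_false, not_forall, not_le]
    obtain ⟨n, hn⟩ := exists_nat_gt x
    exact ⟨n, hn⟩
  rw [hI, measure_empty] at h0
  have hpos : (0:ℝ≥0∞) < ENNReal.ofReal p := ENNReal.ofReal_pos.2 hp
  obtain ⟨n, hn⟩ := (h0.eventually (eventually_lt_nhds hpos)).exists
  refine ⟨n, ?_⟩
  simp only [Set.mem_setOf_eq]
  calc (P (Set.Ici (n:ℝ))).toReal ≤ (ENNReal.ofReal p).toReal :=
        ENNReal.toReal_mono (by simp) hn.le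
    _ = p := ENNReal.toReal_ofReal hp.le

lemma Sbdd (hp1 : (p:ℝ) < 1) : BddBelow {r : ℝ | (P (Set.Ici r)).toReal ≤ p} := by
  have h0 : Tendsto (fun n : ℕ => P (Set.Ici (-(n : ℝ)))) atTop
      (𝓝 (P (⋃ n : ℕ, Set.Ici (-(n:ℝ))))) := by
    apply tendsto_measure_iUnion_atTop
    exact fun a b hab => Set.Ici_subset_Ici.2 (neg_le_neg (by exact_mod_cast hab))
  have hU : (⋃ n : ℕ, Set.Ici (-(n:ℝ))) = Set.univ := by
    ext x
    simp only [Set.mem_iUnion, Set.mem_Ici, Set.mem_univ, iff_true]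
    obtain ⟨n, hn⟩ := exists_nat_gt (-x)
    exact ⟨n, by linarith⟩
  rw [hU, measure_univ] at h0
  have hlt : ENNReal.ofReal p < 1 := by
    calc ENNReal.ofReal p < ENNReal.ofReal 1 := by
          by_cases hp0 : 0 < p
          · exact (ENNReal.ofReal_lt_ofReal_iff (by norm_num)).2 hp1
          · simpa only [ENNReal.ofReal_eq_zero.2 (not_lt.1 hp0)] using
              (by norm_num : (0:ℝ≥0∞) < ENNReal.ofReal 1)
      _ = 1 := by simp
  obtain ⟨n, hn⟩ := (h0.eventually (eventually_gt_nhds hlt)).exists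
  refine ⟨-(n:ℝ), fun r hr => ?_⟩
  by_contra hlt2
  push_neg at hlt2
  have hsub : Set.Ici (-(n:ℝ)) ⊆ Set.Ici r := Set.Ici_subset_Ici.2 hlt2.le
  have : (P (Set.Ici (-(n:ℝ)))).toReal ≤ p := le_trans
    (ENNReal.toReal_mono (measure_ne_top _ _) (measure_mono hsub)) hr
  have : ENNReal.ofReal p < ENNReal.ofReal p :=
    lt_of_lt_of_le hn (by
      rw [← ENNReal.ofReal_toReal (measure_ne_top P (Set.Ici (-(n:ℝ))))]
      exact ENNReal.ofReal_le_ofReal this)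
  exact lt_irrefl _ this

lemma meas_Ici_lt {p s : ℝ} (hp : 0 < p)
    (hs : sInf {r : ℝ | (P (Set.Ici r)).toReal ≤ p} < s) : (P (Set.Ici s)).toReal ≤ p := by
  by_contra hcon
  push_neg at hcon
  have : s ≤ sInf {r : ℝ | (P (Set.Ici r)).toReal ≤ p} := by
    apply le_csInf (Sne hp)
    intro r hr
    by_contra hrs
    push_neg at hrs
    exact absurd (le_trans (ENNReal.toReal_mono (measure_ne_top _ _)
      (measure_mono (Set.Ici_subset_Ici.2 hrs.le))) hr) (not_le.2 hcon)
  exact absurd hs (not_lt.2 this)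

lemma meas_Ioi_q {p : ℝ} (hp : 0 < p) :
    (P (Set.Ioi (sInf {r : ℝ | (P (Set.Ici r)).toReal ≤ p}))).toReal ≤ p := by
  set a := sInf {r : ℝ | (P (Set.Ici r)).toReal ≤ p} with ha
  have hU : (⋃ n : ℕ, Set.Ici (a + 1 / (n + 1))) = Set.Ioi a := by
    ext x
    simp only [Set.mem_iUnion, Set.mem_Ici, Set.mem_Ioi]
    constructor
    · rintro ⟨n, hn⟩
      have : (0:ℝ) < 1 / ((n:ℝ) + 1) := by positivity
      linarith
    · intro hx
      obtain ⟨n, hn⟩ := exists_nat_one_div_lt (show (0:ℝ) < x - a by linarith)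
      exact ⟨n, by linarith⟩
  have h0 : Tendsto (fun n : ℕ => P (Set.Ici (a + 1 / (n + 1)))) atTop
      (𝓝 (P (⋃ n : ℕ, Set.Ici (a + 1 / (n + 1))))) := by
    apply tendsto_measure_iUnion_atTop
    intro m n hmn
    apply Set.Ici_subset_Ici.2
    have : (1:ℝ) / ((n:ℝ) + 1) ≤ 1 / ((m:ℝ) + 1) := by
      apply one_div_le_one_div_of_le (by positivity)
      exact add_le_add_left (by exact_mod_cast hmn) 1
    linarith
  rw [hU] at h0
  have hle : ∀ n : ℕ, P (Set.Ici (a + 1 / (n + 1))) ≤ ENNReal.ofReal p := by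
    intro n
    have h1 : a < a + 1 / ((n:ℝ) + 1) := by
      have : (0:ℝ) < 1 / ((n:ℝ) + 1) := by positivity
      linarith
    have := meas_Ici_lt (P := P) hp (ha ▸ h1)
    rw [← ENNReal.ofReal_toReal (measure_ne_top P _)]
    exact ENNReal.ofReal_le_ofReal this
  have : P (Set.Ioi a) ≤ ENNReal.ofReal p := le_of_tendsto h0 (Eventually.of_forall hle)
  calc (P (Set.Ioi a)).toReal ≤ (ENNReal.ofReal p).toReal :=
        ENNReal.toReal_mono (by simp) this
    _ = p := ENNReal.toReal_ofReal hp.le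

lemma q_antitone {p p' : ℝ} (hp : 0 < p) (hpp : p ≤ p') (hp1 : p' < 1) :
    sInf {r : ℝ | (P (Set.Ici r)).toReal ≤ p'} ≤ sInf {r : ℝ | (P (Set.Ici r)).toReal ≤ p} :=
  csInf_le_csInf (Sbdd hp1) (Sne hp) (fun r hr => le_trans hr hpp)

lemma T_integrand_integrable (hint : Integrable id P) (r : ℝ) :
    Integrable (fun x => max (x - r) 0) P := by
  have hb : Integrable (fun x : ℝ => |x| + |r|) P := hint.abs.add (integrable_const _)
  refine hb.mono' ((continuous_id.sub continuous_const).max continuous_const).aestronglyMeasurable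
    (Eventually.of_forall fun x => ?_)
  simp only [Real.norm_eq_abs]
  rw [abs_of_nonneg (le_max_right _ _)]
  rcases le_or_gt x r with h | h
  · have : max (x - r) 0 = 0 := max_eq_right (by linarith)
    rw [this]; positivity
  · have : max (x - r) 0 = x - r := max_eq_left (by linarith)
    rw [this]
    calc x - r ≤ |x| + |r| := by
          have := le_abs_self x; have := neg_abs_le r; linarith

lemma T_nonneg (r : ℝ) : 0 ≤ T P r := by
  apply integral_nonneg
  intro x; exact le_max_right _ _

lemma T_antitone (hint : Integrable id P) {a b : ℝ} (hab : a ≤ b) : T P b ≤ T P a := by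
  apply integral_mono (T_integrand_integrable hint b) (T_integrand_integrable hint a)
  intro x
  exact max_le_max (by linarith) le_rfl

lemma T_step (hint : Integrable id P) {a b : ℝ} (hab : a ≤ b) :
    T P a ≤ T P b + (b - a) * (P (Set.Ioi a)).toReal := by
  have hind : Integrable ((Set.Ioi a).indicator fun _ : ℝ => b - a) P :=
    (integrable_const (b - a)).indicator measurableSet_Ioi
  have hmono : ∀ x, max (x - a) 0 ≤ max (x - b) 0 + (Set.Ioi a).indicator (fun _ => b - a) x := by
    intro x
    rcases le_or_gt x a with h | h
    · rw [Set.indicator_of_notMem (by simpa using h)]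
      have : max (x - a) 0 = 0 := max_eq_right (by linarith)
      rw [this]; simpa using le_max_right (x - b) 0
    · rw [Set.indicator_of_mem (by simpa using h)]
      rcases le_or_gt x b with h2 | h2
      · have h3 : max (x - a) 0 = x - a := max_eq_left (by linarith)
        rw [h3]
        have := le_max_right (x - b) 0
        linarith
      · have h3 : max (x - a) 0 = x - a := max_eq_left (by linarith)
        have h4 : max (x - b) 0 = x - b := max_eq_left (by linarith)
        rw [h3, h4]; linarith
  calc T P a ≤ ∫ x, (max (x - b) 0 + (Set.Ioi a).indicator (fun _ => b - a) x) ∂P :=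
        integral_mono (T_integrand_integrable hint a)
          ((T_integrand_integrable hint b).add hind) hmono
    _ = T P b + ∫ x, (Set.Ioi a).indicator (fun _ => b - a) x ∂P :=
        integral_add (T_integrand_integrable hint b) hind
    _ = T P b + (b - a) * (P (Set.Ioi a)).toReal := by
        rw [integral_indicator_const (b - a) measurableSet_Ioi]
        simp [smul_eq_mul, mul_comm, measureReal_def]

lemma T_small (hint : Integrable id P) {ε : ℝ} (hε : 0 < ε) : ∃ R : ℝ, T P R ≤ ε := by
  have htend : Tendsto (fun n : ℕ => T P n) atTop (𝓝 0) := by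
    have h0 : (0:ℝ) = ∫ _ : ℝ, (0:ℝ) ∂P := by simp
    rw [h0]
    apply tendsto_integral_of_dominated_convergence (fun x => |x| + 1)
      (fun n => (T_integrand_integrable hint n).1) (hint.abs.add (integrable_const 1))
    · intro n
      refine Eventually.of_forall fun x => ?_
      simp only [Real.norm_eq_abs]
      rw [abs_of_nonneg (le_max_right _ _)]
      rcases le_or_gt x (n:ℝ) with h | h
      · rw [max_eq_right (by linarith)]; positivity
      · rw [max_eq_left (by linarith)]
        have h1 := le_abs_self x
        have : (0:ℝ) ≤ (n:ℝ) := Nat.cast_nonneg n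
        linarith
    · refine Eventually.of_forall fun x => ?_
      obtain ⟨N, hN⟩ := exists_nat_gt x
      apply tendsto_const_nhds.congr'
      filter_upwards [eventually_ge_atTop N] with n hn
      have : x ≤ (n:ℝ) := le_trans hN.le (by exact_mod_cast hn)
      exact (max_eq_right (by linarith)).symm
  obtain ⟨n, hn⟩ := (htend.eventually (eventually_le_nhds hε)).exists
  exact ⟨n, by simpa using hn⟩

lemma geom_bound {ρ : ℝ} (h0 : 0 ≤ ρ) (h1 : ρ < 1) (K : ℕ) :
    ∑ k ∈ Finset.range K, ρ ^ k ≤ 1 / (1 - ρ) := by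
  rw [geom_sum_eq (by linarith : ρ ≠ 1)]
  have heq : (ρ ^ K - 1) / (ρ - 1) = (1 - ρ ^ K) / (1 - ρ) := by
    rw [← neg_div_neg_eq]; ring_nf
  rw [heq]
  have hpow : 0 ≤ ρ ^ K := pow_nonneg h0 K
  exact (div_le_div_iff_of_pos_right (by linarith)).2 (by linarith)

lemma core (hint : Integrable id P) (g : ℝ → ℝ)
    (hg : ∀ p : ℝ, 0 < p → p < 1 → g p = sInf {r : ℝ | (P (Set.Ici r)).toReal ≤ p})
    (hginf : Tendsto g (𝓝[>] (0:ℝ)) atTop)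
    {η δ₀ : ℝ} (hη : 0 < η) (hη2 : η ≤ 1/2) (hδ₀ : 0 < δ₀) (hδ₁ : δ₀ < 1)
    (hg1 : ∀ x : ℝ, 0 < x → x < δ₀ → 1 ≤ g x)
    (hsv : ∀ x : ℝ, 0 < x → x < δ₀ → g (x / 2) ≤ (1 + η) * g x) :
    ∀ δ : ℝ, 0 < δ → δ < δ₀ → T P (g δ) ≤ 4 * η * (δ * g δ) := by
  intro δ hδ hδ'
  set r : ℕ → ℝ := fun k => g (δ / 2 ^ k) with hr
  have hargpos : ∀ k : ℕ, 0 < δ / 2 ^ k := fun k => by positivity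
  have harglt : ∀ k : ℕ, δ / 2 ^ k < δ₀ := by
    intro k
    calc δ / 2 ^ k ≤ δ / 1 := by
          apply div_le_div_of_nonneg_left hδ.le one_pos
          exact one_le_pow₀ (by norm_num : (1:ℝ) ≤ 2)
      _ = δ := div_one δ
      _ < δ₀ := hδ'
  have harglt1 : ∀ k : ℕ, δ / 2 ^ k < 1 := fun k => lt_trans (harglt k) hδ₁
  have hr0 : r 0 = g δ := by simp [hr]
  have h1 : ∀ k, 1 ≤ r k := fun k => hg1 _ (hargpos k) (harglt k)
  have hstep : ∀ k, r (k + 1) ≤ (1 + η) * r k := by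
    intro k
    have harg : δ / 2 ^ (k + 1) = (δ / 2 ^ k) / 2 := by ring
    rw [hr]; simp only
    rw [harg]
    exact hsv _ (hargpos k) (harglt k)
  have hmono : ∀ k, r k ≤ r (k + 1) := by
    intro k
    have h2 : δ / 2 ^ (k + 1) ≤ δ / 2 ^ k := by
      apply div_le_div_of_nonneg_left hδ.le (by positivity)
      exact pow_le_pow_right₀ (by norm_num) (Nat.le_succ k)
    rw [hr]; simp only
    rw [hg _ (hargpos k) (harglt1 k), hg _ (hargpos (k+1)) (harglt1 (k+1))]
    exact q_antitone (hargpos (k+1)) h2 (harglt1 k)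
  have htail : ∀ k, (P (Set.Ioi (r k))).toReal ≤ δ / 2 ^ k := by
    intro k
    rw [hr]; simp only
    rw [hg _ (hargpos k) (harglt1 k)]
    exact meas_Ioi_q (hargpos k)
  have hgrow : ∀ k, r k ≤ (1 + η) ^ k * r 0 := by
    intro k
    induction k with
    | zero => simp
    | succ n ih =>
      calc r (n + 1) ≤ (1 + η) * r n := hstep n
        _ ≤ (1 + η) * ((1 + η) ^ n * r 0) :=
            mul_le_mul_of_nonneg_left ih (by linarith)
        _ = (1 + η) ^ (n + 1) * r 0 := by ring
  have htel : ∀ K : ℕ, T P (r 0) ≤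
      (∑ k ∈ Finset.range K, (r (k + 1) - r k) * (δ / 2 ^ k)) + T P (r K) := by
    intro K
    induction K with
    | zero => simp
    | succ n ih =>
      have h3 : T P (r n) ≤ T P (r (n + 1)) + (r (n + 1) - r n) * (P (Set.Ioi (r n))).toReal :=
        T_step hint (hmono n)
      have h4 : (r (n + 1) - r n) * (P (Set.Ioi (r n))).toReal
          ≤ (r (n + 1) - r n) * (δ / 2 ^ n) :=
        mul_le_mul_of_nonneg_left (htail n) (by linarith [hmono n])
      rw [Finset.sum_range_succ]
      linarith
  have hsum : ∀ K : ℕ, ∑ k ∈ Finset.range K, (r (k + 1) - r k) * (δ / 2 ^ k)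
      ≤ 4 * η * (δ * r 0) := by
    intro K
    have hterm : ∀ k ∈ Finset.range K, (r (k + 1) - r k) * (δ / 2 ^ k)
        ≤ (η * δ * r 0) * ((1 + η) / 2) ^ k := by
      intro k _
      have h5 : r (k + 1) - r k ≤ η * r k := by linarith [hstep k]
      have h6 : r (k + 1) - r k ≤ η * ((1 + η) ^ k * r 0) :=
        le_trans h5 (mul_le_mul_of_nonneg_left (hgrow k) hη.le)
      calc (r (k + 1) - r k) * (δ / 2 ^ k) ≤ (η * ((1 + η) ^ k * r 0)) * (δ / 2 ^ k) :=
            mul_le_mul_of_nonneg_right h6 (hargpos k).le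
        _ = (η * δ * r 0) * ((1 + η) / 2) ^ k := by
            rw [div_pow]; ring
    calc ∑ k ∈ Finset.range K, (r (k + 1) - r k) * (δ / 2 ^ k)
        ≤ ∑ k ∈ Finset.range K, (η * δ * r 0) * ((1 + η) / 2) ^ k :=
          Finset.sum_le_sum hterm
      _ = (η * δ * r 0) * ∑ k ∈ Finset.range K, ((1 + η) / 2) ^ k := by
          rw [Finset.mul_sum]
      _ ≤ (η * δ * r 0) * (1 / (1 - (1 + η) / 2)) := by
          apply mul_le_mul_of_nonneg_left
          · exact geom_bound (by linarith) (by linarith) K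
          · have := h1 0; positivity
      _ ≤ 4 * η * (δ * r 0) := by
          have h7 : 1 / (1 - (1 + η) / 2) ≤ 4 := by
            rw [div_le_iff₀ (by linarith)]
            linarith
          have h8 : 0 ≤ η * δ * r 0 := by have := h1 0; positivity
          calc (η * δ * r 0) * (1 / (1 - (1 + η) / 2)) ≤ (η * δ * r 0) * 4 :=
                mul_le_mul_of_nonneg_left h7 h8
            _ = 4 * η * (δ * r 0) := by ring
  rw [← hr0]
  apply le_of_forall_pos_le_add
  intro ε hε
  obtain ⟨R, hR⟩ := T_small hint hε
  have htendarg : Tendsto (fun K : ℕ => δ / 2 ^ K) atTop (𝓝[>] (0:ℝ)) := by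
    rw [tendsto_nhdsWithin_iff]
    constructor
    · have : Tendsto (fun K : ℕ => ((1:ℝ)/2) ^ K) atTop (𝓝 0) :=
        tendsto_pow_atTop_nhds_zero_of_lt_one (by norm_num) (by norm_num)
      have h9 := this.const_mul δ
      simpa [div_eq_mul_inv, mul_pow, mul_comm] using h9
    · exact Eventually.of_forall fun K => hargpos K
  obtain ⟨K, hK⟩ := ((hginf.comp htendarg).eventually (eventually_ge_atTop R)).exists
  have hTK : T P (r K) ≤ ε := le_trans (T_antitone hint hK) hR
  calc T P (r 0) ≤ (∑ k ∈ Finset.range K, (r (k + 1) - r k) * (δ / 2 ^ k)) + T P (r K) := htel K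
    _ ≤ 4 * η * (δ * r 0) + ε := add_le_add (hsum K) hTK

section Exp

variable {Ω : Type*} [MeasurableSpace Ω] {μ : Measure Ω} [IsProbabilityMeasure μ]
variable {n : ℕ} {Y : Fin n → Fin n → Ω → ℝ}

lemma Y_int (hYm : ∀ i j, Measurable (Y i j)) (hYlaw : ∀ i j, μ.map (Y i j) = P)
    (hint : Integrable id P) (i j : Fin n) : Integrable (Y i j) μ := by
  have h1 : Integrable id (μ.map (Y i j)) := by rw [hYlaw i j]; exact hint
  exact (integrable_map_measure aestronglyMeasurable_id (hYm i j).aemeasurable).mp h1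

lemma Y_max_int (hYm : ∀ i j, Measurable (Y i j)) (hYlaw : ∀ i j, μ.map (Y i j) = P)
    (hint : Integrable id P) (i j : Fin n) (r : ℝ) :
    Integrable (fun ω => max (Y i j ω - r) 0) μ := by
  have h1 : Integrable (fun x => max (x - r) 0) (μ.map (Y i j)) := by
    rw [hYlaw i j]; exact T_integrand_integrable hint r
  exact (integrable_map_measure
    ((continuous_id.sub continuous_const).max continuous_const).aestronglyMeasurable
    (hYm i j).aemeasurable).mp h1

lemma Y_max_integral (hYm : ∀ i j, Measurable (Y i j)) (hYlaw : ∀ i j, μ.map (Y i j) = P)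
    (i j : Fin n) (r : ℝ) :
    ∫ ω, max (Y i j ω - r) 0 ∂μ = T P r := by
  have h1 : ∫ x, max (x - r) 0 ∂(μ.map (Y i j)) = ∫ ω, max (Y i j ω - r) 0 ∂μ :=
    integral_map (hYm i j).aemeasurable
      ((continuous_id.sub continuous_const).max continuous_const).aestronglyMeasurable
  rw [← h1, hYlaw i j, T]

lemma Y_integral (hYm : ∀ i j, Measurable (Y i j)) (hYlaw : ∀ i j, μ.map (Y i j) = P)
    (i j : Fin n) : ∫ ω, Y i j ω ∂μ = ∫ x, x ∂P := by
  have h1 : ∫ x, id x ∂(μ.map (Y i j)) = ∫ ω, id (Y i j ω) ∂μ :=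
    integral_map (hYm i j).aemeasurable aestronglyMeasurable_id
  simp only [id] at h1
  rw [← h1, hYlaw i j]

lemma M_measurable (hYm : ∀ i j, Measurable (Y i j)) :
    Measurable (fun ω => ⨆ π : Equiv.Perm (Fin n), ∑ i, Y i (π i) ω) := by
  haveI : Nonempty (Equiv.Perm (Fin n)) := ⟨1⟩
  have hM : (fun ω => ⨆ π : Equiv.Perm (Fin n), ∑ i, Y i (π i) ω)
      = Finset.univ.sup' Finset.univ_nonempty (fun π : Equiv.Perm (Fin n) => fun ω => ∑ i, Y i (π i) ω) := by
    funext ω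
    rw [Finset.sup'_apply, Finset.sup'_univ_eq_ciSup]
  rw [hM]
  exact Finset.measurable_sup' _ fun π _ => Finset.measurable_sum _ fun i _ => hYm i (π i)

lemma M_abs_bound (ω : Ω) :
    |⨆ π : Equiv.Perm (Fin n), ∑ i, Y i (π i) ω| ≤ ∑ i, ∑ j, |Y i j ω| := by
  haveI : Nonempty (Equiv.Perm (Fin n)) := ⟨1⟩
  have hbd : ∀ π : Equiv.Perm (Fin n), |∑ i, Y i (π i) ω| ≤ ∑ i, ∑ j, |Y i j ω| := by
    intro π
    calc |∑ i, Y i (π i) ω| ≤ ∑ i, |Y i (π i) ω| := Finset.abs_sum_le_sum_abs _ _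
      _ ≤ ∑ i, ∑ j, |Y i j ω| := by
          apply Finset.sum_le_sum
          intro i _
          exact Finset.single_le_sum (f := fun j => |Y i j ω|)
            (fun j _ => abs_nonneg _) (Finset.mem_univ (π i))
  rw [abs_le]
  constructor
  · calc -(∑ i, ∑ j, |Y i j ω|) ≤ -(|∑ i, Y i ((1 : Equiv.Perm (Fin n)) i) ω|) :=
          neg_le_neg (hbd 1)
      _ ≤ ∑ i, Y i ((1 : Equiv.Perm (Fin n)) i) ω := neg_abs_le _
      _ ≤ ⨆ π : Equiv.Perm (Fin n), ∑ i, Y i (π i) ω :=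
          le_ciSup (f := fun π : Equiv.Perm (Fin n) => ∑ i, Y i (π i) ω)
            (Set.Finite.bddAbove (Set.finite_range _)) 1
  · exact ciSup_le fun π => le_trans (le_abs_self _) (hbd π)

lemma M_integrable (hYm : ∀ i j, Measurable (Y i j)) (hYlaw : ∀ i j, μ.map (Y i j) = P)
    (hint : Integrable id P) :
    Integrable (fun ω => ⨆ π : Equiv.Perm (Fin n), ∑ i, Y i (π i) ω) μ := by
  have hG : Integrable (fun ω => ∑ i, ∑ j, |Y i j ω|) μ :=
    integrable_finset_sum _ fun i _ => integrable_finset_sum _ fun j _ =>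
      (Y_int hYm hYlaw hint i j).abs
  refine hG.mono' (M_measurable hYm).aestronglyMeasurable (Eventually.of_forall fun ω => ?_)
  rw [Real.norm_eq_abs]
  exact M_abs_bound ω

end Exp

section Exp2

variable {Ω : Type*} [MeasurableSpace Ω] {μ : Measure Ω} [IsProbabilityMeasure μ]
variable {n : ℕ} {Y : Fin n → Fin n → Ω → ℝ}

lemma EM_le (hYm : ∀ i j, Measurable (Y i j)) (hYlaw : ∀ i j, μ.map (Y i j) = P)
    (hint : Integrable id P) (r : ℝ) :
    ∫ ω, (⨆ π : Equiv.Perm (Fin n), ∑ i, Y i (π i) ω) ∂μ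
      ≤ (n : ℝ) * r + (n : ℝ) ^ 2 * T P r := by
  have hRHSint : Integrable (fun ω => (n : ℝ) * r + ∑ i, ∑ j, max (Y i j ω - r) 0) μ :=
    (integrable_const _).add (integrable_finset_sum _ fun i _ =>
      integrable_finset_sum _ fun j _ => Y_max_int hYm hYlaw hint i j r)
  have hpt : ∀ ω, (⨆ π : Equiv.Perm (Fin n), ∑ i, Y i (π i) ω)
      ≤ (n : ℝ) * r + ∑ i, ∑ j, max (Y i j ω - r) 0 := by
    intro ω
    apply ciSup_le
    intro π
    calc ∑ i, Y i (π i) ω ≤ ∑ i, (r + max (Y i (π i) ω - r) 0) := by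
          apply Finset.sum_le_sum
          intro i _
          have := le_max_left (Y i (π i) ω - r) 0
          linarith
      _ = (n : ℝ) * r + ∑ i, max (Y i (π i) ω - r) 0 := by
          rw [Finset.sum_add_distrib, Finset.sum_const, Finset.card_univ, Fintype.card_fin,
            nsmul_eq_mul]
      _ ≤ (n : ℝ) * r + ∑ i, ∑ j, max (Y i j ω - r) 0 := by
          apply add_le_add_right
          apply Finset.sum_le_sum
          intro i _
          exact Finset.single_le_sum (f := fun j => max (Y i j ω - r) 0)
            (fun j _ => le_max_right _ _) (Finset.mem_univ (π i))
  calc ∫ ω, (⨆ π : Equiv.Perm (Fin n), ∑ i, Y i (π i) ω) ∂μ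
      ≤ ∫ ω, ((n : ℝ) * r + ∑ i, ∑ j, max (Y i j ω - r) 0) ∂μ :=
        integral_mono (M_integrable hYm hYlaw hint) hRHSint hpt
    _ = (n : ℝ) * r + ∑ i : Fin n, ∑ j : Fin n, ∫ ω, max (Y i j ω - r) 0 ∂μ := by
        rw [integral_add (integrable_const _) (integrable_finset_sum _ fun i _ =>
          integrable_finset_sum _ fun j _ => Y_max_int hYm hYlaw hint i j r)]
        rw [integral_const]
        simp only [measureReal_def, measure_univ, ENNReal.toReal_one, smul_eq_mul, one_mul]
        congr 1
        rw [integral_finset_sum _ fun i _ => integrable_finset_sum _ fun j _ =>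
          Y_max_int hYm hYlaw hint i j r]
        exact Finset.sum_congr rfl fun i _ =>
          integral_finset_sum _ fun j _ => Y_max_int hYm hYlaw hint i j r
    _ = (n : ℝ) * r + (n : ℝ) ^ 2 * T P r := by
        congr 1
        rw [Finset.sum_congr rfl fun i _ => Finset.sum_congr rfl fun j _ =>
          Y_max_integral hYm hYlaw i j r]
        simp [Finset.sum_const, Finset.card_univ]
        ring

lemma EM_ge (hYm : ∀ i j, Measurable (Y i j)) (hYlaw : ∀ i j, μ.map (Y i j) = P)
    (hint : Integrable id P) :
    (n : ℝ) * ∫ x, x ∂P ≤ ∫ ω, (⨆ π : Equiv.Perm (Fin n), ∑ i, Y i (π i) ω) ∂μ := by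
  have hpt : ∀ ω, (∑ i, Y i i ω) ≤ ⨆ π : Equiv.Perm (Fin n), ∑ i, Y i (π i) ω := by
    intro ω
    have h1 : ∑ i, Y i i ω = ∑ i, Y i ((1 : Equiv.Perm (Fin n)) i) ω := by simp
    rw [h1]
    exact le_ciSup (f := fun π : Equiv.Perm (Fin n) => ∑ i, Y i (π i) ω)
      (Set.Finite.bddAbove (Set.finite_range _)) 1
  calc (n : ℝ) * ∫ x, x ∂P = ∑ i : Fin n, ∫ ω, Y i i ω ∂μ := by
        rw [Finset.sum_congr rfl fun i _ => Y_integral hYm hYlaw i i]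
        simp [Finset.sum_const, Finset.card_univ]
    _ = ∫ ω, (∑ i, Y i i ω) ∂μ :=
        (integral_finset_sum _ fun i _ => Y_int hYm hYlaw hint i i).symm
    _ ≤ ∫ ω, (⨆ π : Equiv.Perm (Fin n), ∑ i, Y i (π i) ω) ∂μ :=
        integral_mono (integrable_finset_sum _ fun i _ => Y_int hYm hYlaw hint i i)
          (M_integrable hYm hYlaw hint) hpt

end Exp2

end RAP

/-- **Maximum of the random assignment process** (Theorem 1, part (2)).
For each `n`, let `(X n i j)` be an `n × n` array of i.i.d. real random variables with
common law `P`, `E|X| < ∞`, and assume the tail quantile function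
`g p = inf {r : P(X ≥ r) ≤ p}` tends to infinity at `0` and is slowly varying at `0`.
Then `limsup_{n → ∞} E 𝓜_n / (n g(1/n)) ≤ 1`. -/
theorem limsup_expectation_max_assignment
    {Ω : ℕ → Type*} [∀ n, MeasurableSpace (Ω n)]
    (μ : ∀ n, Measure (Ω n)) [∀ n, IsProbabilityMeasure (μ n)]
    (X : ∀ n, Fin n → Fin n → Ω n → ℝ)
    (hmeas : ∀ n i j, Measurable (X n i j))
    (hindep : ∀ n, iIndepFun
      (fun p : Fin n × Fin n => X n p.1 p.2) (μ n))
    (P : Measure ℝ) [IsProbabilityMeasure P]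
    (hlaw : ∀ n i j, (μ n).map (X n i j) = P)
    (hint : Integrable id P)
    (g : ℝ → ℝ)
    (hg : ∀ p : ℝ, 0 < p → p < 1 → g p = sInf {r : ℝ | (P (Set.Ici r)).toReal ≤ p})
    (hginf : Tendsto g (𝓝[>] 0) atTop)
    (hslow : ∀ c : ℝ, 0 < c → Tendsto (fun p => g (c * p) / g p) (𝓝[>] 0) (𝓝 1)) :
    Filter.limsup
      (fun n : ℕ =>
        (∫ ω, (⨆ π : Equiv.Perm (Fin n), ∑ i, X n i (π i) ω) ∂(μ n)) / ((n : ℝ) * g (1 / n)))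
      atTop ≤ 1 := by
  set u : ℕ → ℝ := fun n : ℕ =>
    (∫ ω, (⨆ π : Equiv.Perm (Fin n), ∑ i, X n i (π i) ω) ∂(μ n)) / ((n : ℝ) * g (1 / n)) with hu
  set m : ℝ := ∫ x, x ∂P with hm
  -- a positive region where g ≥ 1
  obtain ⟨δ₂, hδ₂pos, hδ₂⟩ : ∃ δ₂ > 0, ∀ x : ℝ, 0 < x → x < δ₂ → 1 ≤ g x := by
    have h := hginf.eventually (eventually_ge_atTop (1:ℝ))
    rw [(nhdsGT_basis (0:ℝ)).eventually_iff] at h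
    obtain ⟨b, hb0, hb⟩ := h
    exact ⟨b, hb0, fun x hx0 hxb => hb ⟨hx0, hxb⟩⟩
  -- eventual lower bound (coboundedness)
  have hlow : ∀ᶠ n : ℕ in atTop, -|m| ≤ u n := by
    filter_upwards [tendsto_one_div_atTop_nhds_zero_nat.eventually (eventually_lt_nhds hδ₂pos),
      eventually_ge_atTop 1] with n h1 h2
    have hnR : (1:ℝ) ≤ (n:ℝ) := by exact_mod_cast h2
    have hnpos : (0:ℝ) < n := by linarith
    have hg1n : 1 ≤ g (1 / (n:ℝ)) := hδ₂ _ (by positivity) h1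
    have hgpos : 0 < g (1 / (n:ℝ)) := by linarith
    have hD : 0 < (n:ℝ) * g (1 / (n:ℝ)) := mul_pos hnpos hgpos
    have hge := RAP.EM_ge (hmeas n) (hlaw n) hint
    have h3 : (n:ℝ) * m / ((n:ℝ) * g (1 / (n:ℝ)))
        ≤ (∫ ω, (⨆ π : Equiv.Perm (Fin n), ∑ i, X n i (π i) ω) ∂(μ n))
            / ((n:ℝ) * g (1 / (n:ℝ))) :=
      (div_le_div_iff_of_pos_right hD).2 hge
    have h4 : (n:ℝ) * m / ((n:ℝ) * g (1 / (n:ℝ))) = m / g (1 / (n:ℝ)) :=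
      mul_div_mul_left m _ (ne_of_gt hnpos)
    have h5 : -|m| ≤ m / g (1 / (n:ℝ)) := by
      rcases le_or_gt 0 m with hm0 | hm0
      · have h6 : 0 ≤ m / g (1 / (n:ℝ)) := div_nonneg hm0 hgpos.le
        have := abs_nonneg m
        linarith
      · rw [abs_of_neg hm0]
        have h7 : m ≤ m / g (1 / (n:ℝ)) := by
          rw [le_div_iff₀ hgpos]
          nlinarith
        linarith
    rw [h4] at h3
    exact le_trans h5 h3
  have hco : IsCoboundedUnder (· ≤ ·) atTop u :=
    isCoboundedUnder_le_of_eventually_le atTop hlow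
  -- eventual upper bound
  have hup : ∀ ε : ℝ, 0 < ε → ε ≤ 1 → ∀ᶠ n : ℕ in atTop, u n ≤ 1 + ε := by
    intro ε hε hε1
    set η : ℝ := ε / 5 with hη
    have hηpos : 0 < η := by rw [hη]; linarith
    have hη2 : η ≤ 1 / 2 := by rw [hη]; linarith
    have hev : ∀ᶠ x in 𝓝[>] (0:ℝ), 1 ≤ g x ∧ g ((1/2) * x) / g x < 1 + η :=
      (hginf.eventually (eventually_ge_atTop 1)).and
        ((hslow (1/2) (by norm_num)).eventually (eventually_lt_nhds (by linarith)))
    rw [(nhdsGT_basis (0:ℝ)).eventually_iff] at hev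
    obtain ⟨b, hb0, hb⟩ := hev
    set δ₀ : ℝ := min b (1/2) with hδ₀
    have hδ₀pos : 0 < δ₀ := lt_min hb0 (by norm_num)
    have hδ₀lt1 : δ₀ < 1 := lt_of_le_of_lt (min_le_right _ _) (by norm_num)
    have hg1 : ∀ x : ℝ, 0 < x → x < δ₀ → 1 ≤ g x := fun x h1 h2 =>
      (hb ⟨h1, lt_of_lt_of_le h2 (min_le_left _ _)⟩).1
    have hsv : ∀ x : ℝ, 0 < x → x < δ₀ → g (x / 2) ≤ (1 + η) * g x := by
      intro x h1 h2
      have h3 := (hb ⟨h1, lt_of_lt_of_le h2 (min_le_left _ _)⟩).2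
      have h4 : (0:ℝ) < g x := lt_of_lt_of_le one_pos (hg1 x h1 h2)
      rw [div_lt_iff₀ h4] at h3
      have h5 : (1/2 : ℝ) * x = x / 2 := by ring
      rw [h5] at h3
      linarith
    have hcore := RAP.core hint g hg hginf hηpos hη2 hδ₀pos hδ₀lt1 hg1 hsv
    filter_upwards [tendsto_one_div_atTop_nhds_zero_nat.eventually (eventually_lt_nhds hδ₀pos),
      eventually_ge_atTop 1] with n h1 h2
    have hnR : (1:ℝ) ≤ (n:ℝ) := by exact_mod_cast h2
    have hnpos : (0:ℝ) < n := by linarith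
    have hδn : 0 < 1 / (2 * (n:ℝ)) := by positivity
    have hhalf : 1 / (2 * (n:ℝ)) < 1 / (n:ℝ) := by
      rw [div_lt_div_iff₀ (by positivity) (by positivity)]
      nlinarith
    have hδn2 : 1 / (2 * (n:ℝ)) < δ₀ := lt_trans hhalf h1
    have hTb := hcore _ hδn hδn2
    have hEM := RAP.EM_le (hmeas n) (hlaw n) hint (g (1 / (2 * (n:ℝ))))
    have hg12 : g (1 / (2 * (n:ℝ))) ≤ (1 + η) * g (1 / (n:ℝ)) := by
      have h6 := hsv (1 / (n:ℝ)) (by positivity) h1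
      have harg : (1 / (n:ℝ)) / 2 = 1 / (2 * (n:ℝ)) := by ring
      rw [harg] at h6
      exact h6
    have hg1n : 1 ≤ g (1 / (n:ℝ)) := hg1 _ (by positivity) h1
    have hg2n : 1 ≤ g (1 / (2 * (n:ℝ))) := hg1 _ hδn hδn2
    have hD : 0 < (n:ℝ) * g (1 / (n:ℝ)) := mul_pos hnpos (by linarith)
    rw [hu]
    simp only
    rw [div_le_iff₀ hD]
    have hfac : (1 + 2 * η) * (1 + η) ≤ 1 + ε := by rw [hη]; nlinarith
    calc (∫ ω, (⨆ π : Equiv.Perm (Fin n), ∑ i, X n i (π i) ω) ∂(μ n))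
        ≤ (n:ℝ) * g (1 / (2 * (n:ℝ))) + (n:ℝ) ^ 2 * RAP.T P (g (1 / (2 * (n:ℝ)))) := hEM
      _ ≤ (n:ℝ) * g (1 / (2 * (n:ℝ)))
            + (n:ℝ) ^ 2 * (4 * η * (1 / (2 * (n:ℝ)) * g (1 / (2 * (n:ℝ))))) := by
          have := mul_le_mul_of_nonneg_left hTb (by positivity : (0:ℝ) ≤ (n:ℝ) ^ 2)
          linarith
      _ = (n:ℝ) * ((1 + 2 * η) * g (1 / (2 * (n:ℝ)))) := by
          field_simp
          ring
      _ ≤ (n:ℝ) * ((1 + 2 * η) * ((1 + η) * g (1 / (n:ℝ)))) := by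
          apply mul_le_mul_of_nonneg_left _ hnpos.le
          apply mul_le_mul_of_nonneg_left hg12 (by linarith)
      _ = ((1 + 2 * η) * (1 + η)) * ((n:ℝ) * g (1 / (n:ℝ))) := by ring
      _ ≤ (1 + ε) * ((n:ℝ) * g (1 / (n:ℝ))) :=
          mul_le_mul_of_nonneg_right hfac hD.le
  have hls : ∀ ε : ℝ, 0 < ε → ε ≤ 1 → limsup u atTop ≤ 1 + ε := fun ε h1 h2 =>
    limsup_le_of_le hco (hup ε h1 h2)
  by_contra hcon
  push_neg at hcon
  set L : ℝ := limsup u atTop with hL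
  have hεpos : 0 < min ((L - 1) / 2) 1 := lt_min (by linarith) one_pos
  have hε1 : min ((L - 1) / 2) 1 ≤ 1 := min_le_right _ _
  have h8 := hls _ hεpos hε1
  have h9 : min ((L - 1) / 2) 1 ≤ (L - 1) / 2 := min_le_left _ _
  linarith
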